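/- Under the stated finiteness conditions, every u ∈ M can be written uniquely as u = Σ_{n≥0} f^{(n)} u_n, where u_n ∈ M, e(u_n) = 0 for every n, and only finitely many u_n are nonzero. -/

import Mathlib

/-!
STATEMENT 1. Under the stated finiteness conditions, every `u ∈ M` can
be written uniquely as `u = Σ_{n≥0} f^{(n)} u_n`, where `u_n ∈ M`,
`e (u_n) = 0` for every `n`, and only finitely many `u_n` are nonzero.
-/

noncomputable section

set_option synthInstance.maxHeartbeats 1000000
set_option maxHeartbeats 1000000

/-- The base field `K = ℚ(v)`. -/
abbrev K : Type := RatFunc ℚ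

/-- The indeterminate `v ∈ K`. -/
def vv : K := RatFunc.X

/-- The quantum integer `[n]_v = (vⁿ - v⁻ⁿ)/(v - v⁻¹)`. -/
def qint (n : ℕ) : K := (vv ^ n - vv⁻¹ ^ n) / (vv - vv⁻¹)

/-- The quantum factorial `[n]_v! = [1]_v [2]_v ⋯ [n]_v`. -/
def qfact (n : ℕ) : K := ∏ i ∈ Finset.range n, qint (i + 1)

lemma vv_ne_zero : vv ≠ 0 := RatFunc.X_ne_zero

lemma vv_pow_ne_one {m : ℕ} (hm : 0 < m) : vv ^ m ≠ 1 := by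
  intro h
  have h2 : (algebraMap (Polynomial ℚ) K) (Polynomial.X ^ m) = algebraMap (Polynomial ℚ) K 1 := by
    simpa [map_pow, RatFunc.algebraMap_X, vv] using h
  have h3 : (Polynomial.X : Polynomial ℚ) ^ m = 1 := RatFunc.algebraMap_injective ℚ h2
  have := congrArg Polynomial.natDegree h3
  simp [Polynomial.natDegree_X_pow] at this
  omega

lemma vv_sub_inv_ne_zero : vv - vv⁻¹ ≠ 0 := by
  intro h
  have hv := sub_eq_zero.mp h
  have : vv ^ 2 = 1 := by
    rw [pow_two]; nth_rewrite 2 [hv]; exact mul_inv_cancel₀ vv_ne_zero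
  exact vv_pow_ne_one two_pos this

lemma qint_ne_zero {n : ℕ} (hn : 0 < n) : qint n ≠ 0 := by
  unfold qint
  apply div_ne_zero _ vv_sub_inv_ne_zero
  intro h
  have hv := sub_eq_zero.mp h
  have : vv ^ (2 * n) = 1 := by
    rw [two_mul, pow_add]
    nth_rewrite 2 [hv]
    rw [← mul_pow, mul_inv_cancel₀ vv_ne_zero, one_pow]
  exact vv_pow_ne_one (by omega) this

lemma qfact_ne_zero (n : ℕ) : qfact n ≠ 0 :=
  Finset.prod_ne_zero_iff.mpr fun i _ => qint_ne_zero (Nat.succ_pos i)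

lemma qfact_zero : qfact 0 = 1 := by simp [qfact]

/-- The scalar `C n = ∑_{k<n} v^{-2k}` appearing in the commutation of `e` with `fⁿ`. -/
def CC (n : ℕ) : K := ∑ k ∈ Finset.range n, (vv⁻¹ ^ 2) ^ k

lemma CC_ne_zero {n : ℕ} (hn : 0 < n) : CC n ≠ 0 := by
  have hx1 : (vv⁻¹ ^ 2 : K) ≠ 1 := by
    intro h
    rw [inv_pow, inv_eq_one] at h
    exact vv_pow_ne_one two_pos h
  rw [CC, geom_sum_eq hx1]
  apply div_ne_zero _ (sub_ne_zero.mpr hx1)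
  rw [sub_ne_zero]
  intro h
  rw [← pow_mul, inv_pow, inv_eq_one] at h
  exact vv_pow_ne_one (m := 2 * n) (by omega) h

lemma CC_succ (n : ℕ) : CC (n + 1) = CC n + (vv⁻¹ ^ 2) ^ n := by
  simp [CC, Finset.sum_range_succ]

section Aux

variable {M : Type*} [AddCommGroup M] [Module K M] {e f : Module.End K M}
  (hef : e * f = (vv⁻¹ ^ 2) • (f * e) + 1)

include hef in
lemma comm_pow (n : ℕ) :
    e * f ^ (n + 1) = ((vv⁻¹ ^ 2) ^ (n + 1)) • (f ^ (n + 1) * e) + CC (n + 1) • f ^ n := by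
  induction n with
  | zero => simpa [CC] using hef
  | succ n ih =>
    have h1 : e * f ^ (n + 2) = (e * f ^ (n + 1)) * f := by rw [mul_assoc, ← pow_succ]
    rw [h1, ih, add_mul, smul_mul_assoc, smul_mul_assoc, mul_assoc, hef, mul_add, mul_one,
      mul_smul_comm, ← mul_assoc, ← pow_succ, smul_add, smul_smul, ← pow_succ,
      CC_succ (n + 1), add_smul]
    abel

include hef in
lemma e_fpow {m : M} (hm : e m = 0) (n : ℕ) :
    e ((f ^ (n + 1)) m) = CC (n + 1) • (f ^ n) m := by
  have h := congrArg (fun g : Module.End K M => g m) (comm_pow hef n)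
  simpa [Module.End.mul_apply, LinearMap.add_apply, LinearMap.smul_apply, hm] using h

include hef in
lemma epow_fpow_zero {m : M} (hm : e m = 0) (n : ℕ) :
    (e ^ (n + 1)) ((f ^ n) m) = 0 := by
  induction n with
  | zero => simpa using hm
  | succ n ih =>
    have h1 : (e ^ (n + 2)) ((f ^ (n + 1)) m) = (e ^ (n + 1)) (e ((f ^ (n + 1)) m)) := by
      rw [pow_succ, Module.End.mul_apply]
    rw [h1, e_fpow hef hm n, map_smul, ih, smul_zero]

include hef in
lemma epow_fpow_eq {m : M} (hm : e m = 0) (n : ℕ) :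
    (e ^ n) ((f ^ n) m) = (∏ j ∈ Finset.range n, CC (j + 1)) • m := by
  induction n with
  | zero => simp
  | succ n ih =>
    have h1 : (e ^ (n + 1)) ((f ^ (n + 1)) m) = (e ^ n) (e ((f ^ (n + 1)) m)) := by
      rw [pow_succ, Module.End.mul_apply]
    rw [h1, e_fpow hef hm n, map_smul, ih, smul_smul, Finset.prod_range_succ, mul_comm]

include hef in
lemma zero_of_sum_zero :
    ∀ N : ℕ, ∀ z : ℕ →₀ M, (∀ n, e (z n) = 0) → (∀ n ∈ z.support, n < N) →
      (z.sum fun n un => (qfact n)⁻¹ • (f ^ n) un) = 0 → z = 0 := by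
  intro N
  induction N with
  | zero =>
    intro z _ hsupp _
    have : z.support = ∅ :=
      Finset.eq_empty_of_forall_notMem fun n hn => Nat.not_lt_zero n (hsupp n hn)
    exact Finsupp.support_eq_empty.mp this
  | succ N ih =>
    intro z hz hsupp hsum
    have key : (e ^ N) ((qfact N)⁻¹ • (f ^ N) (z N)) = 0 := by
      have h0 : (e ^ N) (z.sum fun n un => (qfact n)⁻¹ • (f ^ n) un) = 0 := by
        rw [hsum, map_zero]
      rw [Finsupp.sum, map_sum] at h0
      rw [← h0]
      symm
      apply Finset.sum_eq_single N
      · intro n hn hne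
        have hnN : n < N := lt_of_le_of_ne (Nat.lt_succ_iff.mp (hsupp n hn)) hne
        have hNdecomp : N = (N - n - 1) + (n + 1) := by omega
        rw [map_smul, hNdecomp, pow_add, Module.End.mul_apply, epow_fpow_zero hef (hz n) n,
          map_zero, smul_zero]
      · intro hN
        rw [Finsupp.notMem_support_iff.mp hN, map_zero, smul_zero, map_zero]
    rw [map_smul, epow_fpow_eq hef (hz N), smul_smul] at key
    have hcne : (qfact N)⁻¹ * ∏ j ∈ Finset.range N, CC (j + 1) ≠ 0 :=
      mul_ne_zero (inv_ne_zero (qfact_ne_zero N))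
        (Finset.prod_ne_zero_iff.mpr fun j _ => CC_ne_zero j.succ_pos)
    have hzN : z N = 0 := by
      rcases smul_eq_zero.mp key with h | h
      · exact absurd h hcne
      · exact h
    apply ih z hz _ hsum
    intro n hn
    have h1 : n < N + 1 := hsupp n hn
    have h2 : n ≠ N := by
      intro h
      exact Finsupp.mem_support_iff.mp hn (h ▸ hzN)
    omega

include hef in
lemma exists_expansion :
    ∀ k : ℕ, ∀ u : M, (e ^ k) u = 0 →
      ∃ w : ℕ →₀ M, (∀ n, e (w n) = 0) ∧
        u = w.sum fun n un => (qfact n)⁻¹ • (f ^ n) un := by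
  intro k
  induction k with
  | zero =>
    intro u hu
    have : u = 0 := by simpa using hu
    exact ⟨0, fun n => by simp, by simp [this]⟩
  | succ k ih =>
    intro u hu
    have heu : (e ^ k) (e u) = 0 := by
      rw [← Module.End.mul_apply, ← pow_succ]; exact hu
    obtain ⟨w, hw, hwsum⟩ := ih (e u) heu
    set d : ℕ → K := fun n => qfact n * (qfact (n + 1))⁻¹ * CC (n + 1) with hd
    have hdne : ∀ n, d n ≠ 0 := fun n =>
      mul_ne_zero (mul_ne_zero (qfact_ne_zero n) (inv_ne_zero (qfact_ne_zero (n + 1))))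
        (CC_ne_zero n.succ_pos)
    set t : M := ∑ n ∈ w.support, (qfact (n + 1))⁻¹ • ((f ^ (n + 1)) ((d n)⁻¹ • w n)) with ht
    have het : e t = w.sum fun n un => (qfact n)⁻¹ • (f ^ n) un := by
      rw [ht, map_sum, Finsupp.sum]
      apply Finset.sum_congr rfl
      intro n _
      rw [map_smul (f ^ (n + 1)), map_smul, map_smul, e_fpow hef (hw n) n,
        smul_smul, smul_smul]
      congr 1
      have h1 := qfact_ne_zero n
      have h2 := qfact_ne_zero (n + 1)
      have h3 := CC_ne_zero (n := n + 1) n.succ_pos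
      rw [hd]
      field_simp
    set u0 : M := u - t with hu0
    have heu0 : e u0 = 0 := by rw [hu0, map_sub, het, ← hwsum, sub_self]
    have hsupp : ∀ n, (fun n => (d n)⁻¹ • w n) n ≠ 0 → n ∈ w.support := by
      intro n h
      rw [Finsupp.mem_support_iff]
      intro h0
      exact h (by simp only [h0, smul_zero])
    set w' : ℕ →₀ M :=
      Finsupp.single 0 u0 +
        Finsupp.embDomain ⟨Nat.succ, Nat.succ_injective⟩
          (Finsupp.onFinset w.support (fun n => (d n)⁻¹ • w n) hsupp) with hw'
    have hw'0 : w' 0 = u0 := by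
      rw [hw', Finsupp.add_apply, Finsupp.single_eq_same,
        Finsupp.embDomain_notin_range, add_zero]
      intro h
      obtain ⟨a, ha⟩ := h
      exact Nat.succ_ne_zero a ha
    have hw's : ∀ n, w' (n + 1) = (d n)⁻¹ • w n := by
      intro n
      rw [hw', Finsupp.add_apply]
      have hs1 : (Finsupp.single 0 u0 : ℕ →₀ M) (n + 1) = 0 :=
        Finsupp.single_eq_of_ne (by omega)
      have hs2 : (Finsupp.embDomain ⟨Nat.succ, Nat.succ_injective⟩
          (Finsupp.onFinset w.support (fun n => (d n)⁻¹ • w n) hsupp)) (n + 1) =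
          (d n)⁻¹ • w n := by
        have := Finsupp.embDomain_apply_self (⟨Nat.succ, Nat.succ_injective⟩ : ℕ ↪ ℕ)
          (Finsupp.onFinset w.support (fun n => (d n)⁻¹ • w n) hsupp) n
        simpa [Finsupp.onFinset_apply] using this
      rw [hs1, hs2, zero_add]
    refine ⟨w', ?_, ?_⟩
    · intro n
      cases n with
      | zero => rw [hw'0]; exact heu0
      | succ n => rw [hw's n, map_smul, hw n, smul_zero]
    · have hsplit : u = u0 + t := by rw [hu0]; abel
      rw [hsplit, hw', Finsupp.sum_add_index' (fun a => by simp) (fun a b₁ b₂ => by simp),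
        Finsupp.sum_single_index (by simp), Finsupp.sum_embDomain,
        Finsupp.sum_of_support_subset _ Finsupp.support_onFinset_subset _
          (fun i _ => by simp), ht]
      simp [qfact_zero, Finsupp.onFinset_apply]

end Aux

theorem unique_boson_expansion
    {P : Type*} [AddCommGroup P] [DecidableEq P] (α : P) (hα : ∀ n : ℕ, 0 < n → n • α ≠ 0)
    {M : Type*} [AddCommGroup M] [Module K M]
    (Mg : P → Submodule K M) (hM : DirectSum.IsInternal Mg)
    (e f : Module.End K M)
    (hef : e * f = (vv⁻¹ ^ 2) • (f * e) + 1)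
    (he : ∀ lam : P, ∀ m ∈ Mg lam, e m ∈ Mg (lam + α))
    (hf : ∀ lam : P, ∀ m ∈ Mg lam, f m ∈ Mg (lam - α))
    (hfin : ∀ lam : P, FiniteDimensional K (Mg lam))
    (hvan : ∀ lam : P, ∃ N : ℕ, ∀ n : ℕ, N ≤ n → Mg (lam + n • α) = ⊥) :
    ∀ u : M, ∃! w : ℕ →₀ M,
      (∀ n, e (w n) = 0) ∧
      u = w.sum fun n un => (qfact n)⁻¹ • (f ^ n) un := by
  -- `e` raises weights
  have hepow : ∀ (n : ℕ) (lam : P) (m : M), m ∈ Mg lam → (e ^ n) m ∈ Mg (lam + n • α) := by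
    intro n
    induction n with
    | zero => intro lam m hm; simpa using hm
    | succ n ihn =>
      intro lam m hm
      have h1 : (e ^ (n + 1)) m = e ((e ^ n) m) := by
        rw [pow_succ', Module.End.mul_apply]
      rw [h1]
      have := he (lam + n • α) _ (ihn lam m hm)
      rwa [add_assoc, ← succ_nsmul] at this
  -- monotonicity of vanishing under powers of `e`
  have hmono : ∀ (x : M) (k l : ℕ), k ≤ l → (e ^ k) x = 0 → (e ^ l) x = 0 := by
    intro x k l hkl h
    obtain ⟨d, rfl⟩ := Nat.exists_eq_add_of_le hkl
    rw [add_comm, pow_add, Module.End.mul_apply, h, map_zero]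
  -- local nilpotency of `e`
  have hnil : ∀ u : M, ∃ k : ℕ, (e ^ k) u = 0 := by
    intro u
    have hu : u ∈ ⨆ lam, Mg lam := by
      rw [hM.submodule_iSup_eq_top]; trivial
    refine Submodule.iSup_induction (motive := fun x => ∃ k, (e ^ k) x = 0) Mg hu ?_ ⟨0, by simp⟩ ?_
    · intro lam x hx
      obtain ⟨N, hN⟩ := hvan lam
      refine ⟨N, ?_⟩
      have := hepow N lam x hx
      rw [hN N le_rfl] at this
      simpa using this
    · rintro x y ⟨k1, hk1⟩ ⟨k2, hk2⟩
      exact ⟨max k1 k2, by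
        rw [map_add, hmono x k1 _ (le_max_left _ _) hk1,
          hmono y k2 _ (le_max_right _ _) hk2, add_zero]⟩
  intro u
  obtain ⟨k, hk⟩ := hnil u
  obtain ⟨w, hw1, hw2⟩ := exists_expansion hef k u hk
  refine ⟨w, ⟨hw1, hw2⟩, ?_⟩
  rintro w₂ ⟨h1, h2⟩
  have hz : w₂ - w = 0 := by
    set N : ℕ := (w₂ - w).support.sup id + 1 with hN
    apply zero_of_sum_zero hef N
    · intro n
      rw [Finsupp.sub_apply, map_sub, h1 n, hw1 n, sub_self]
    · intro n hn
      have := Finset.le_sup (f := id) hn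
      simp only [id_eq] at this
      omega
    · rw [Finsupp.sum_sub_index (by intro a b₁ b₂; rw [map_sub, smul_sub]), ← h2, ← hw2,
        sub_self]
  exact sub_eq_zero.mp hz
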